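/- Let B = {x ∈ ℝ² : ‖x‖ ≤ r} be the closed disk of radius r > 0 centered at the origin, where ‖·‖ is the Euclidean norm, and let v ∈ ℝ². Then the limit V(v) = lim_{λ→∞} (|λB| − |λB ∩ (v + λB)|)/λ exists and equals 2r‖v‖. -/

import Mathlib

open MeasureTheory Filter Topology

private lemma slice_vol (R d y : ℝ) (hd : 0 < d) :
    volume {x : ℝ | y ^ 2 + x ^ 2 ≤ R ^ 2 ∧ ¬(y ^ 2 + (x - d) ^ 2 ≤ R ^ 2)}
      = ENNReal.ofReal (min d (2 * Real.sqrt (R ^ 2 - y ^ 2))) := by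
  by_cases h : y ^ 2 ≤ R ^ 2
  · set s : ℝ := Real.sqrt (R ^ 2 - y ^ 2) with hs
    have hc : (0:ℝ) ≤ R ^ 2 - y ^ 2 := by linarith
    have hs0 : 0 ≤ s := Real.sqrt_nonneg _
    have hs2 : s ^ 2 = R ^ 2 - y ^ 2 := Real.sq_sqrt hc
    have key : ∀ z t : ℝ, (y ^ 2 + (z - t) ^ 2 ≤ R ^ 2) ↔ (t - s ≤ z ∧ z ≤ t + s) := by
      intro z t
      constructor
      · intro hzt
        constructor
        · nlinarith [sq_nonneg (z - t + s)]
        · nlinarith [sq_nonneg (z - t - s)]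
      · intro ⟨h1, h2⟩; nlinarith
    have hset : {x : ℝ | y ^ 2 + x ^ 2 ≤ R ^ 2 ∧ ¬(y ^ 2 + (x - d) ^ 2 ≤ R ^ 2)}
        = Set.Icc (-s) s \ Set.Icc (d - s) (d + s) := by
      ext x
      have h0 := key x 0
      have hd' := key x d
      simp only [Set.mem_setOf_eq, Set.mem_diff, Set.mem_Icc, sub_zero, zero_sub, zero_add] at *
      tauto
    rw [hset]
    by_cases hle : d ≤ 2 * s
    · have : Set.Icc (-s) s \ Set.Icc (d - s) (d + s) = Set.Ico (-s) (d - s) := by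
        ext x
        simp only [Set.mem_diff, Set.mem_Icc, Set.mem_Ico, not_and, not_le]
        constructor
        · rintro ⟨⟨h1, h2⟩, h3⟩
          refine ⟨h1, ?_⟩
          by_contra hcon
          push_neg at hcon
          have := h3 hcon
          linarith
        · rintro ⟨h1, h2⟩
          exact ⟨⟨h1, by linarith⟩, fun hx => absurd hx (by linarith)⟩
      rw [this, Real.volume_Ico, min_eq_left hle]
      congr 1; ring
    · push_neg at hle
      have : Set.Icc (-s) s \ Set.Icc (d - s) (d + s) = Set.Icc (-s) s := by
        ext x
        simp only [Set.mem_diff, Set.mem_Icc, and_iff_left_iff_imp, not_and, not_le]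
        rintro ⟨h1, h2⟩ h3
        linarith
      rw [this, Real.volume_Icc, min_eq_right hle.le]
      congr 1; ring
  · push_neg at h
    have hempty : {x : ℝ | y ^ 2 + x ^ 2 ≤ R ^ 2 ∧ ¬(y ^ 2 + (x - d) ^ 2 ≤ R ^ 2)} = ∅ := by
      ext x
      simp only [Set.mem_setOf_eq, Set.mem_empty_iff_false, iff_false, not_and]
      intro h1
      nlinarith [sq_nonneg x]
    rw [hempty, measure_empty]
    have : Real.sqrt (R ^ 2 - y ^ 2) = 0 := Real.sqrt_eq_zero'.mpr (by linarith)
    rw [this]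
    simp [min_eq_right hd.le]

private lemma diff_vol (R d : ℝ) (hR : 0 ≤ R) (hd : 0 < d) (v : EuclideanSpace ℝ (Fin 2))
    (hv : ‖v‖ = d) :
    volume (Metric.closedBall (0 : EuclideanSpace ℝ (Fin 2)) R \ Metric.closedBall v R)
      = ∫⁻ y : ℝ, ENNReal.ofReal (min d (2 * Real.sqrt (R ^ 2 - y ^ 2))) := by
  have hd0 : d ≠ 0 := hd.ne'
  have hcard : Module.finrank ℝ (EuclideanSpace ℝ (Fin 2)) = Fintype.card (Fin 2) := by simp
  have horth : Orthonormal ℝ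
      (Set.restrict {1} (fun _ : Fin 2 => (d⁻¹ • v : EuclideanSpace ℝ (Fin 2)))) := by
    rw [orthonormal_iff_ite]
    intro i j
    have hij : i = j := Subtype.ext (by
      have hi := i.2; have hj := j.2
      simp only [Set.mem_singleton_iff] at hi hj
      rw [hi, hj])
    subst hij
    simp only [if_pos rfl, Set.restrict_apply]
    show inner ℝ (d⁻¹ • v) (d⁻¹ • v) = (1:ℝ)
    rw [real_inner_smul_left, real_inner_smul_right, real_inner_self_eq_norm_sq, hv]
    field_simp
  obtain ⟨b, hb⟩ := horth.exists_orthonormalBasis_extension_of_card_eq hcard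
  have hb1 : b 1 = d⁻¹ • v := hb 1 rfl
  have hrv : b.repr v = EuclideanSpace.single 1 d := by
    have hv' : v = d • b 1 := by rw [hb1, smul_smul, mul_inv_cancel₀ hd0, one_smul]
    rw [hv', b.repr.map_smul, b.repr_self]
    ext j
    simp [EuclideanSpace.single_apply, mul_ite]
  set S : Set (ℝ × ℝ) :=
    {p : ℝ × ℝ | p.1 ^ 2 + p.2 ^ 2 ≤ R ^ 2 ∧ ¬(p.1 ^ 2 + (p.2 - d) ^ 2 ≤ R ^ 2)} with hSdef
  have hS : MeasurableSet S := by
    have h1 : MeasurableSet {p : ℝ × ℝ | p.1 ^ 2 + p.2 ^ 2 ≤ R ^ 2} :=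
      measurableSet_le (by fun_prop) measurable_const
    have h2 : MeasurableSet {p : ℝ × ℝ | p.1 ^ 2 + (p.2 - d) ^ 2 ≤ R ^ 2} :=
      measurableSet_le (by fun_prop) measurable_const
    exact h1.inter h2.compl
  set T : EuclideanSpace ℝ (Fin 2) → ℝ × ℝ := fun x => (b.repr x 0, b.repr x 1) with hTdef
  have hT : MeasurePreserving T volume volume := by
    have h1 := (MeasureTheory.volume_preserving_finTwoArrow ℝ).comp
      ((EuclideanSpace.volume_preserving_symm_measurableEquiv_toLp (Fin 2)).comp
        b.measurePreserving_repr)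
    exact h1
  have hnorm : ∀ w : EuclideanSpace ℝ (Fin 2), ‖w‖ ≤ R ↔ (w 0) ^ 2 + (w 1) ^ 2 ≤ R ^ 2 := by
    intro w
    rw [EuclideanSpace.norm_eq, Real.sqrt_le_left hR]
    simp [Fin.sum_univ_two, sq_abs]
  have hpre : Metric.closedBall (0 : EuclideanSpace ℝ (Fin 2)) R \ Metric.closedBall v R
      = T ⁻¹' S := by
    ext x
    have e1 : ‖x‖ ≤ R ↔ (b.repr x 0) ^ 2 + (b.repr x 1) ^ 2 ≤ R ^ 2 := by
      rw [← b.repr.norm_map x]; exact hnorm _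
    have e2 : ‖x - v‖ ≤ R ↔ (b.repr x 0) ^ 2 + (b.repr x 1 - d) ^ 2 ≤ R ^ 2 := by
      rw [← b.repr.norm_map (x - v), map_sub, hrv]
      have h3 := hnorm (b.repr x - EuclideanSpace.single 1 d)
      simpa [EuclideanSpace.single_apply] using h3
    simp only [Set.mem_diff, Metric.mem_closedBall, dist_eq_norm, sub_zero, Set.mem_preimage,
      hSdef, Set.mem_setOf_eq, hTdef]
    rw [e1, e2]
  rw [hpre, hT.measure_preimage hS.nullMeasurableSet, Measure.volume_eq_prod,
    Measure.prod_apply hS]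
  congr 1
  funext y
  have hslice : Prod.mk y ⁻¹' S
      = {x : ℝ | y ^ 2 + x ^ 2 ≤ R ^ 2 ∧ ¬(y ^ 2 + (x - d) ^ 2 ≤ R ^ 2)} := rfl
  rw [hslice, slice_vol R d y hd]


private lemma conv_lem (r d : ℝ) (hr : 0 < r) (hd : 0 < d) :
    Tendsto (fun L : ℝ => ∫ u : ℝ, min d (2 * (L * Real.sqrt (r ^ 2 - u ^ 2))))
      atTop (𝓝 (2 * r * d)) := by
  have hbi : Integrable ((Set.Icc (-r) r).indicator fun _ : ℝ => d) := by
    rw [integrable_indicator_iff measurableSet_Icc]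
    exact (integrableOn_const_iff).mpr (Or.inr (by rw [Real.volume_Icc]; exact ENNReal.ofReal_lt_top))
  have key := tendsto_integral_filter_of_dominated_convergence
      (μ := volume) (l := atTop)
      (F := fun (L : ℝ) (u : ℝ) => min d (2 * (L * Real.sqrt (r ^ 2 - u ^ 2))))
      (f := (Set.Ioo (-r) r).indicator fun _ : ℝ => d)
      ((Set.Icc (-r) r).indicator fun _ : ℝ => d)
      (Eventually.of_forall fun L =>
        (Continuous.aestronglyMeasurable (by
          exact continuous_const.min (continuous_const.mul
            (continuous_const.mul (Real.continuous_sqrt.comp (by continuity)))))))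
      ?_ hbi ?_
  · have hIoo : ∫ u : ℝ, (Set.Ioo (-r) r).indicator (fun _ : ℝ => d) u = 2 * r * d := by
      rw [integral_indicator_const d measurableSet_Ioo, measureReal_def, Real.volume_Ioo,
        ENNReal.toReal_ofReal (by linarith), smul_eq_mul]
      ring
    rwa [hIoo] at key
  · -- bound
    filter_upwards [eventually_ge_atTop (0 : ℝ)] with L hL
    refine Eventually.of_forall fun u => ?_
    by_cases hu : u ^ 2 ≤ r ^ 2
    · have humem : u ∈ Set.Icc (-r) r := by
        constructor
        · nlinarith
        · nlinarith
      rw [Set.indicator_of_mem humem, Real.norm_eq_abs, abs_of_nonneg (le_min hd.le (by positivity))]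
      exact min_le_left _ _
    · push_neg at hu
      have hz : Real.sqrt (r ^ 2 - u ^ 2) = 0 := Real.sqrt_eq_zero'.mpr (by linarith)
      rw [hz]
      simp only [mul_zero, min_eq_right hd.le, norm_zero]
      exact Set.indicator_nonneg (fun _ _ => hd.le) u
  · -- pointwise limit
    refine Eventually.of_forall fun u => ?_
    by_cases hu : u ∈ Set.Ioo (-r) r
    · rw [Set.indicator_of_mem hu]
      obtain ⟨hu1, hu2⟩ := hu
      have hs : 0 < Real.sqrt (r ^ 2 - u ^ 2) := Real.sqrt_pos.mpr (by nlinarith)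
      set s := Real.sqrt (r ^ 2 - u ^ 2)
      refine Tendsto.congr' ?_ tendsto_const_nhds
      filter_upwards [eventually_ge_atTop (d / (2 * s))] with L hL
      have : d ≤ 2 * (L * s) := by
        rw [div_le_iff₀ (by positivity)] at hL
        nlinarith
      exact (min_eq_left this).symm
    · rw [Set.indicator_of_notMem hu]
      simp only [Set.mem_Ioo, not_and_or, not_lt] at hu
      have hz : Real.sqrt (r ^ 2 - u ^ 2) = 0 := by
        apply Real.sqrt_eq_zero'.mpr
        rcases hu with h | h
        · nlinarith
        · nlinarith
      simp only [hz, mul_zero, min_eq_right hd.le]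
      exact tendsto_const_nhds

/-- for the closed disk `B` of radius `r` centered at the origin in `ℝ²`
and `v ∈ ℝ²`, `(|λB| - |λB ∩ (v + λB)|)/λ → 2r‖v‖` as `λ → ∞`. -/
theorem stmt_17 (r : ℝ) (hr : 0 < r) (v : EuclideanSpace ℝ (Fin 2)) :
    Tendsto (fun L : ℝ =>
      ((volume ((fun x => L • x) '' Metric.closedBall (0 : EuclideanSpace ℝ (Fin 2)) r)).toReal
        - (volume ((fun x => L • x) '' Metric.closedBall (0 : EuclideanSpace ℝ (Fin 2)) r ∩
            (fun x => v + x) ''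
              ((fun x => L • x) '' Metric.closedBall (0 : EuclideanSpace ℝ (Fin 2)) r))).toReal)
        / L)
      atTop (𝓝 (2 * r * ‖v‖)) := by
  by_cases hv : v = 0
  · subst hv
    have heq : (fun L : ℝ =>
        ((volume ((fun x => L • x) '' Metric.closedBall (0 : EuclideanSpace ℝ (Fin 2)) r)).toReal
          - (volume ((fun x => L • x) '' Metric.closedBall (0 : EuclideanSpace ℝ (Fin 2)) r ∩
              (fun x => (0 : EuclideanSpace ℝ (Fin 2)) + x) ''
                ((fun x => L • x) '' Metric.closedBall (0 : EuclideanSpace ℝ (Fin 2)) r))).toReal)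
          / L) = fun _ => 0 := by
      funext L
      simp [Set.image_id', Set.inter_self]
    rw [heq]
    simpa using (tendsto_const_nhds : Tendsto (fun _ : ℝ => (0:ℝ)) atTop (𝓝 0))
  · set d := ‖v‖ with hdv
    have hd : 0 < d := norm_pos_iff.mpr hv
    refine Tendsto.congr' ?_ (conv_lem r d hr hd)
    filter_upwards [eventually_gt_atTop (0 : ℝ)] with L hL
    set R := L * r with hRdef
    have hR0 : 0 ≤ R := by positivity
    have step1 : (fun x => L • x) '' Metric.closedBall (0 : EuclideanSpace ℝ (Fin 2)) r
        = Metric.closedBall (0 : EuclideanSpace ℝ (Fin 2)) R := by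
      rw [Set.image_smul, smul_closedBall _ _ hr.le, smul_zero, Real.norm_eq_abs,
        abs_of_pos hL]
    have step2 : (fun x => v + x) '' Metric.closedBall (0 : EuclideanSpace ℝ (Fin 2)) R
        = Metric.closedBall v R := by
      ext z
      simp only [Set.mem_image, Metric.mem_closedBall, dist_zero_right, dist_eq_norm]
      constructor
      · rintro ⟨x, hx, rfl⟩
        simpa [add_sub_cancel_left] using hx
      · intro hz
        exact ⟨z - v, by simpa [norm_sub_rev] using hz, by abel⟩
    rw [step1, step2]
    have hsub : volume (Metric.closedBall (0 : EuclideanSpace ℝ (Fin 2)) R ∩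
          Metric.closedBall v R)
        ≤ volume (Metric.closedBall (0 : EuclideanSpace ℝ (Fin 2)) R) :=
      measure_mono Set.inter_subset_left
    have hfin : volume (Metric.closedBall (0 : EuclideanSpace ℝ (Fin 2)) R ∩
          Metric.closedBall v R) ≠ ⊤ :=
      (lt_of_le_of_lt hsub measure_closedBall_lt_top).ne
    have hdiff : volume (Metric.closedBall (0 : EuclideanSpace ℝ (Fin 2)) R \
          Metric.closedBall v R)
        = volume (Metric.closedBall (0 : EuclideanSpace ℝ (Fin 2)) R)
          - volume (Metric.closedBall (0 : EuclideanSpace ℝ (Fin 2)) R ∩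
              Metric.closedBall v R) := by
      rw [← Set.diff_self_inter]
      exact measure_diff Set.inter_subset_left
        (measurableSet_closedBall.inter measurableSet_closedBall).nullMeasurableSet hfin
    have htr : (volume (Metric.closedBall (0 : EuclideanSpace ℝ (Fin 2)) R)).toReal
        - (volume (Metric.closedBall (0 : EuclideanSpace ℝ (Fin 2)) R ∩
            Metric.closedBall v R)).toReal
        = (volume (Metric.closedBall (0 : EuclideanSpace ℝ (Fin 2)) R \
            Metric.closedBall v R)).toReal := by
      rw [hdiff, ENNReal.toReal_sub_of_le hsub measure_closedBall_lt_top.ne]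
    rw [htr, diff_vol R d hR0 hd v rfl]
    have hg : ∀ y : ℝ, 0 ≤ min d (2 * Real.sqrt (R ^ 2 - y ^ 2)) := fun y =>
      le_min hd.le (by positivity)
    rw [← integral_eq_lintegral_of_nonneg_ae (ae_of_all _ hg)
      (Continuous.aestronglyMeasurable (by
        exact continuous_const.min (continuous_const.mul
          (Real.continuous_sqrt.comp (by continuity)))))]
    have hint := MeasureTheory.Measure.integral_comp_mul_left
      (fun y : ℝ => min d (2 * Real.sqrt (R ^ 2 - y ^ 2))) L
    have heq2 : ∀ u : ℝ, min d (2 * (L * Real.sqrt (r ^ 2 - u ^ 2)))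
        = min d (2 * Real.sqrt (R ^ 2 - (L * u) ^ 2)) := by
      intro u
      rw [show R ^ 2 - (L * u) ^ 2 = L ^ 2 * (r ^ 2 - u ^ 2) by rw [hRdef]; ring,
        Real.sqrt_mul (sq_nonneg L), Real.sqrt_sq hL.le]
    simp_rw [heq2]
    rw [hint, abs_of_pos (inv_pos.mpr hL), smul_eq_mul, inv_mul_eq_div]
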